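/- Let 0 ≤ α ≤ 2, 1+μ > 0, γ > 0 and t ≥ 0. For any continuously differentiable function u: [0,∞) → ℝ with compact support one has ∫_0^t u(r)² (1+|r-t|)^{-2-μ} r² (1+t+r)^{-α} dr + ∫_t^∞ u(r)² (1+|r-t|)^{-1+γ} r² (1+t+r)^{-α} dr ≤ C ( ∫_0^t |u'(r)|² (1+|r-t|)^{-μ} r² (1+t+r)^{-α} dr + ∫_t^∞ |u'(r)|² (1+|r-t|)^{1+γ} r² (1+t+r)^{-α} dr ), where the constant C depends only on lower bounds for γ and 1+μ. -/

import Mathlib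

open Real MeasureTheory

private lemma rpow_mul_self' {s : ℝ} (hs : 0 < s) (p q : ℝ) :
    s ^ p * s ^ q = s ^ (p + q) := (Real.rpow_add hs p q).symm

/-- Pointwise AM-GM bound for the cross term. -/
private lemma cross_bound (ε x y s w e1 e e2 : ℝ) (hε : 0 < ε) (hs : 0 < s) (hw : 0 ≤ w)
    (h12 : e1 + e2 = e + e) :
    -(2 * (x * y) * (s ^ e * w)) ≤ ε * (x ^ 2 * (s ^ e1 * w)) + ε⁻¹ * (y ^ 2 * (s ^ e2 * w)) := by
  set a := Real.sqrt ε * x * s ^ (e1/2) * Real.sqrt w with ha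
  set b := Real.sqrt ε⁻¹ * y * s ^ (e2/2) * Real.sqrt w with hb
  have hsq := sq_nonneg (a + b)
  have ha2 : a ^ 2 = ε * (x ^ 2 * (s ^ e1 * w)) := by
    have h3 : (s ^ (e1/2)) ^ 2 = s ^ e1 := by
      rw [sq, rpow_mul_self' hs]; norm_num
    have : a ^ 2 = (Real.sqrt ε ^ 2) * x ^ 2 * ((s ^ (e1/2)) ^ 2) * (Real.sqrt w ^ 2) := by
      rw [ha]; ring
    rw [this, Real.sq_sqrt hε.le, Real.sq_sqrt hw, h3]; ring
  have hb2 : b ^ 2 = ε⁻¹ * (y ^ 2 * (s ^ e2 * w)) := by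
    have h3 : (s ^ (e2/2)) ^ 2 = s ^ e2 := by
      rw [sq, rpow_mul_self' hs]; norm_num
    have : b ^ 2 = (Real.sqrt ε⁻¹ ^ 2) * y ^ 2 * ((s ^ (e2/2)) ^ 2) * (Real.sqrt w ^ 2) := by
      rw [hb]; ring
    rw [this, Real.sq_sqrt (by positivity), Real.sq_sqrt hw, h3]; ring
  have hab : a * b = x * y * (s ^ e * w) := by
    have h1 : Real.sqrt ε * Real.sqrt ε⁻¹ = 1 := by
      rw [← Real.sqrt_mul hε.le, mul_inv_cancel₀ hε.ne', Real.sqrt_one]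
    have h2 : Real.sqrt w * Real.sqrt w = w := Real.mul_self_sqrt hw
    have h3 : s ^ (e1/2) * s ^ (e2/2) = s ^ e := by
      rw [rpow_mul_self' hs]; congr 1; linarith
    calc a * b = (Real.sqrt ε * Real.sqrt ε⁻¹) * (x * y) * (s ^ (e1/2) * s ^ (e2/2))
        * (Real.sqrt w * Real.sqrt w) := by rw [ha, hb]; ring
      _ = x * y * (s ^ e * w) := by rw [h1, h2, h3]; ring
  nlinarith [hsq, ha2, hb2, hab]

private lemma contOn_integrand {v f : ℝ → ℝ} (hv : Continuous v) (hf : Continuous f)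
    (e1 e2 t : ℝ) (s : Set ℝ) (h1 : ∀ r ∈ s, f r ≠ 0) (h2 : ∀ r ∈ s, (1:ℝ) + t + r ≠ 0) :
    ContinuousOn (fun r => (v r) ^ 2 * (f r) ^ e1 * r ^ 2 * (1 + t + r) ^ e2) s := by
  refine ContinuousOn.mul (ContinuousOn.mul (ContinuousOn.mul ?_ ?_) ?_) ?_
  · exact (hv.pow 2).continuousOn
  · exact ContinuousOn.rpow_const hf.continuousOn (fun r hr => Or.inl (h1 r hr))
  · exact (continuous_pow 2).continuousOn
  · exact ContinuousOn.rpow_const (continuous_const.add continuous_id).continuousOn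
      (fun r hr => Or.inl (h2 r hr))

private lemma integral_Ioi_eq_Ioc {f : ℝ → ℝ} {t R : ℝ} (htR : t ≤ R)
    (h0 : ∀ r, R < r → f r = 0) (hf : IntegrableOn f (Set.Ioc t R)) :
    ∫ r in Set.Ioi t, f r = ∫ r in Set.Ioc t R, f r := by
  have hz : f =ᵐ[volume.restrict (Set.Ioi R)] (fun _ => 0) := by
    filter_upwards [ae_restrict_mem measurableSet_Ioi] with r hr using h0 r hr
  have hint : IntegrableOn f (Set.Ioi R) :=
    (integrable_zero _ _ _).congr hz.symm
  have hzero : ∫ r in Set.Ioi R, f r = 0 := by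
    rw [integral_congr_ae hz]; simp
  rw [← Set.Ioc_union_Ioi_eq_Ioi htR,
    setIntegral_union (Set.Ioc_disjoint_Ioi le_rfl) measurableSet_Ioi hf hint, hzero, add_zero]

/-- Exterior estimate: Hardy inequality on `(t, R]` plus control of the boundary term. -/
private lemma ext_est (γ α t R : ℝ) (hγ : 0 < γ) (hα0 : 0 ≤ α) (hα2 : α ≤ 2)
    (ht : 0 ≤ t) (htR : t ≤ R) (u : ℝ → ℝ) (hu : ContDiff ℝ 1 u) (huR : u R = 0) :
    (u t) ^ 2 * (t ^ 2 * (1 + t + t) ^ (-α))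
      + (γ/2) * (∫ r in Set.Ioc t R, (u r) ^ 2 * (1 + (r - t)) ^ (-1 + γ) * r ^ 2 * (1 + t + r) ^ (-α))
    ≤ (2/γ) * (∫ r in Set.Ioc t R,
        (deriv u r) ^ 2 * (1 + (r - t)) ^ (1 + γ) * r ^ 2 * (1 + t + r) ^ (-α)) := by
  have huc : Continuous u := hu.continuous
  have hu' : Continuous (deriv u) := hu.continuous_deriv le_rfl
  set g : ℝ → ℝ := fun r => (u r) ^ 2 * (1 + (r - t)) ^ (-1 + γ) * r ^ 2 * (1 + t + r) ^ (-α)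
    with hgdef
  set bb : ℝ → ℝ := fun r => (deriv u r) ^ 2 * (1 + (r - t)) ^ (1 + γ) * r ^ 2 * (1 + t + r) ^ (-α)
    with hbbdef
  set F : ℝ → ℝ := fun r => (u r) ^ 2 * ((1 + (r - t)) ^ γ * (r ^ 2 * (1 + t + r) ^ (-α)))
    with hFdef
  set F' : ℝ → ℝ := fun r =>
      2 * u r * deriv u r * ((1 + (r - t)) ^ γ * (r ^ 2 * (1 + t + r) ^ (-α)))
      + (u r) ^ 2 * ((γ * (1 + (r - t)) ^ (-1 + γ)) * (r ^ 2 * (1 + t + r) ^ (-α))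
        + (1 + (r - t)) ^ γ *
          (2 * r * (1 + t + r) ^ (-α) + r ^ 2 * (-α * (1 + t + r) ^ (-α - 1)))) with hF'def
  -- derivative computation
  have hderiv : ∀ r ∈ Set.Icc t R, HasDerivAt F (F' r) r := by
    intro r hr
    have hs : (0:ℝ) < 1 + (r - t) := by have := hr.1; linarith
    have hp : (0:ℝ) < 1 + t + r := by have := hr.1; linarith
    have h1 : HasDerivAt (fun x => (u x) ^ 2) (2 * u r * deriv u r) r := by
      have hd := ((hu.differentiable one_ne_zero) r).hasDerivAt
      have := hd.fun_pow 2
      simpa [mul_comm, mul_assoc, mul_left_comm] using this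
    have hsub : HasDerivAt (fun x : ℝ => 1 + (x - t)) 1 r := by
      simpa using ((hasDerivAt_id r).sub_const t).const_add 1
    have h2 : HasDerivAt (fun x => (1 + (x - t)) ^ γ) (γ * (1 + (r - t)) ^ (-1 + γ)) r := by
      have := hsub.rpow_const (p := γ) (Or.inl hs.ne')
      convert this using 1
      rw [one_mul]
      congr 1
      ring
    have h3 : HasDerivAt (fun x : ℝ => x ^ 2) (2 * r) r := by
      simpa using hasDerivAt_pow 2 r
    have hadd : HasDerivAt (fun x : ℝ => 1 + t + x) 1 r := by
      simpa using (hasDerivAt_id r).const_add (1 + t)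
    have h4 : HasDerivAt (fun x => (1 + t + x) ^ (-α)) (-α * (1 + t + r) ^ (-α - 1)) r := by
      have := hadd.rpow_const (p := -α) (Or.inl hp.ne')
      convert this using 1
      ring
    have h5 := h3.mul h4
    have h6 := h2.mul h5
    have h7 := h1.mul h6
    convert h7 using 1 <;> rfl
  -- continuity facts
  have hne1 : ∀ r ∈ Set.Icc t R, (1:ℝ) + (r - t) ≠ 0 := fun r hr =>
    ne_of_gt (by have := hr.1; linarith)
  have hne2 : ∀ r ∈ Set.Icc t R, (1:ℝ) + t + r ≠ 0 := fun r hr =>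
    ne_of_gt (by have := hr.1; linarith)
  have hcontsub : Continuous (fun r : ℝ => 1 + (r - t)) := by continuity
  have hcg : ContinuousOn g (Set.Icc t R) :=
    contOn_integrand huc hcontsub _ _ _ _ hne1 hne2
  have hcbb : ContinuousOn bb (Set.Icc t R) :=
    contOn_integrand hu' hcontsub _ _ _ _ hne1 hne2
  have hcF' : ContinuousOn F' (Set.Icc t R) := by
    have c1 : ContinuousOn (fun r : ℝ => (1 + (r - t)) ^ γ) (Set.Icc t R) :=
      ContinuousOn.rpow_const hcontsub.continuousOn (fun r hr => Or.inl (hne1 r hr))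
    have c2 : ContinuousOn (fun r : ℝ => (1 + (r - t)) ^ (-1 + γ)) (Set.Icc t R) :=
      ContinuousOn.rpow_const hcontsub.continuousOn (fun r hr => Or.inl (hne1 r hr))
    have c3 : ContinuousOn (fun r : ℝ => (1 + t + r) ^ (-α)) (Set.Icc t R) :=
      ContinuousOn.rpow_const (continuous_const.add continuous_id).continuousOn
        (fun r hr => Or.inl (hne2 r hr))
    have c4 : ContinuousOn (fun r : ℝ => (1 + t + r) ^ (-α - 1)) (Set.Icc t R) :=
      ContinuousOn.rpow_const (continuous_const.add continuous_id).continuousOn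
        (fun r hr => Or.inl (hne2 r hr))
    have cw : ContinuousOn (fun r : ℝ => r ^ 2 * (1 + t + r) ^ (-α)) (Set.Icc t R) :=
      (continuous_pow 2).continuousOn.mul c3
    have cw' : ContinuousOn
        (fun r : ℝ => 2 * r * (1 + t + r) ^ (-α) + r ^ 2 * (-α * (1 + t + r) ^ (-α - 1)))
        (Set.Icc t R) :=
      ((continuous_const.mul continuous_id).continuousOn.mul c3).add
        ((continuous_pow 2).continuousOn.mul (continuousOn_const.mul c4))
    exact ((continuous_const.mul huc |>.mul hu').continuousOn.mul (c1.mul cw)).add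
      ((huc.pow 2).continuousOn.mul
        (((continuousOn_const.mul c2).mul cw).add (c1.mul cw')))
  have hintF' : IntervalIntegrable F' volume t R :=
    (by rwa [Set.uIcc_of_le htR] : ContinuousOn F' (Set.uIcc t R)).intervalIntegrable
  have hig : IntervalIntegrable g volume t R :=
    (by rwa [Set.uIcc_of_le htR] : ContinuousOn g (Set.uIcc t R)).intervalIntegrable
  have hibb : IntervalIntegrable bb volume t R :=
    (by rwa [Set.uIcc_of_le htR] : ContinuousOn bb (Set.uIcc t R)).intervalIntegrable
  -- fundamental theorem of calculus
  have hFTC : ∫ r in t..R, F' r = F R - F t :=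
    intervalIntegral.integral_eq_sub_of_hasDerivAt
      (fun r hr => hderiv r (by rwa [Set.uIcc_of_le htR] at hr)) hintF'
  have hFR : F R = 0 := by simp [hFdef, huR]
  have hFt : F t = (u t) ^ 2 * (t ^ 2 * (1 + t + t) ^ (-α)) := by
    simp [hFdef]
  -- pointwise lower bound for F'
  have hpt : ∀ r ∈ Set.Icc t R, (γ/2) * g r - (2/γ) * bb r ≤ F' r := by
    intro r hr
    have hs : (0:ℝ) < 1 + (r - t) := by have := hr.1; linarith
    have hp : (0:ℝ) < 1 + t + r := by have := hr.1; linarith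
    have hr0 : (0:ℝ) ≤ r := le_trans ht hr.1
    have hwpos : (0:ℝ) ≤ r ^ 2 * (1 + t + r) ^ (-α) := by positivity
    have hcross := cross_bound (γ/2) (u r) (deriv u r) (1 + (r - t))
      (r ^ 2 * (1 + t + r) ^ (-α)) (-1 + γ) γ (1 + γ) (by positivity) hs hwpos (by ring)
    have hinv : (γ/2)⁻¹ = 2/γ := by
      rw [inv_div]
    rw [hinv] at hcross
    have hsplit : (1 + t + r) ^ (-α) = (1 + t + r) ^ (-α - 1) * (1 + t + r) := by
      rw [← Real.rpow_add_one hp.ne' (-α - 1)]; congr 1; ring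
    have hq : (0:ℝ) < (1 + t + r) ^ (-α - 1) := Real.rpow_pos_of_pos hp _
    have hw' : (0:ℝ) ≤ 2 * r * (1 + t + r) ^ (-α)
        + r ^ 2 * (-α * (1 + t + r) ^ (-α - 1)) := by
      rw [hsplit]
      have h2r : (0:ℝ) ≤ r * (1 + t + r) ^ (-α - 1) := by positivity
      nlinarith [mul_nonneg h2r hr0, mul_nonneg h2r ht]
    have hterm : (0:ℝ) ≤ (u r) ^ 2 * ((1 + (r - t)) ^ γ
        * (2 * r * (1 + t + r) ^ (-α) + r ^ 2 * (-α * (1 + t + r) ^ (-α - 1)))) :=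
      mul_nonneg (sq_nonneg _) (mul_nonneg (Real.rpow_pos_of_pos hs _).le hw')
    simp only [hgdef, hbbdef, hF'def]
    nlinarith [hcross, hterm]
  -- integrate the pointwise bound
  have hmono : ∫ r in t..R, ((γ/2) * g r - (2/γ) * bb r) ≤ ∫ r in t..R, F' r :=
    intervalIntegral.integral_mono_on htR
      ((hig.const_mul _).sub (hibb.const_mul _)) hintF' hpt
  rw [intervalIntegral.integral_sub (hig.const_mul _) (hibb.const_mul _),
    intervalIntegral.integral_const_mul, intervalIntegral.integral_const_mul, hFTC, hFR, hFt]
    at hmono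
  rw [← intervalIntegral.integral_of_le htR, ← intervalIntegral.integral_of_le htR]
  linarith

/-- Interior estimate on `(0, t]`; the boundary term at `0` vanishes since `w 0 = 0`. -/
private lemma int_est (μ α t : ℝ) (hν : 0 < 1 + μ) (hα0 : 0 ≤ α) (hα2 : α ≤ 2)
    (ht : 0 ≤ t) (u : ℝ → ℝ) (hu : ContDiff ℝ 1 u) :
    ((1 + μ)/2) * (∫ r in Set.Ioc (0:ℝ) t,
        (u r) ^ 2 * (1 + (t - r)) ^ (-(2 + μ)) * r ^ 2 * (1 + t + r) ^ (-α))
    ≤ (u t) ^ 2 * (t ^ 2 * (1 + t + t) ^ (-α))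
      + (2/(1 + μ)) * (∫ r in Set.Ioc (0:ℝ) t,
        (deriv u r) ^ 2 * (1 + (t - r)) ^ (-μ) * r ^ 2 * (1 + t + r) ^ (-α)) := by
  have huc : Continuous u := hu.continuous
  have hu' : Continuous (deriv u) := hu.continuous_deriv le_rfl
  set g : ℝ → ℝ := fun r => (u r) ^ 2 * (1 + (t - r)) ^ (-(2 + μ)) * r ^ 2 * (1 + t + r) ^ (-α)
    with hgdef
  set bb : ℝ → ℝ := fun r => (deriv u r) ^ 2 * (1 + (t - r)) ^ (-μ) * r ^ 2 * (1 + t + r) ^ (-α)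
    with hbbdef
  set F : ℝ → ℝ := fun r => (u r) ^ 2 * ((1 + (t - r)) ^ (-(1 + μ)) * (r ^ 2 * (1 + t + r) ^ (-α)))
    with hFdef
  set F' : ℝ → ℝ := fun r =>
      2 * u r * deriv u r * ((1 + (t - r)) ^ (-(1 + μ)) * (r ^ 2 * (1 + t + r) ^ (-α)))
      + (u r) ^ 2 * (((1 + μ) * (1 + (t - r)) ^ (-(2 + μ))) * (r ^ 2 * (1 + t + r) ^ (-α))
        + (1 + (t - r)) ^ (-(1 + μ)) *
          (2 * r * (1 + t + r) ^ (-α) + r ^ 2 * (-α * (1 + t + r) ^ (-α - 1)))) with hF'def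
  have hderiv : ∀ r ∈ Set.Icc (0:ℝ) t, HasDerivAt F (F' r) r := by
    intro r hr
    have hs : (0:ℝ) < 1 + (t - r) := by have := hr.2; linarith
    have hp : (0:ℝ) < 1 + t + r := by have := hr.1; linarith
    have h1 : HasDerivAt (fun x => (u x) ^ 2) (2 * u r * deriv u r) r := by
      have hd := ((hu.differentiable one_ne_zero) r).hasDerivAt
      have := hd.fun_pow 2
      simpa [mul_comm, mul_assoc, mul_left_comm] using this
    have hsub : HasDerivAt (fun x : ℝ => 1 + (t - x)) (-1) r := by
      simpa using ((hasDerivAt_id r).const_sub t).const_add 1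
    have h2 : HasDerivAt (fun x => (1 + (t - x)) ^ (-(1 + μ)))
        ((1 + μ) * (1 + (t - r)) ^ (-(2 + μ))) r := by
      have := hsub.rpow_const (p := -(1 + μ)) (Or.inl hs.ne')
      convert this using 1
      rw [show (-(1 + μ) - 1 : ℝ) = -(2 + μ) by ring]
      ring
    have h3 : HasDerivAt (fun x : ℝ => x ^ 2) (2 * r) r := by
      simpa using hasDerivAt_pow 2 r
    have hadd : HasDerivAt (fun x : ℝ => 1 + t + x) 1 r := by
      simpa using (hasDerivAt_id r).const_add (1 + t)
    have h4 : HasDerivAt (fun x => (1 + t + x) ^ (-α)) (-α * (1 + t + r) ^ (-α - 1)) r := by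
      have := hadd.rpow_const (p := -α) (Or.inl hp.ne')
      convert this using 1
      ring
    have h5 := h3.mul h4
    have h6 := h2.mul h5
    have h7 := h1.mul h6
    convert h7 using 1 <;> rfl
  have hne1 : ∀ r ∈ Set.Icc (0:ℝ) t, (1:ℝ) + (t - r) ≠ 0 := fun r hr =>
    ne_of_gt (by have := hr.2; linarith)
  have hne2 : ∀ r ∈ Set.Icc (0:ℝ) t, (1:ℝ) + t + r ≠ 0 := fun r hr =>
    ne_of_gt (by have := hr.1; linarith)
  have hcontsub : Continuous (fun r : ℝ => 1 + (t - r)) := by continuity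
  have hcg : ContinuousOn g (Set.Icc (0:ℝ) t) :=
    contOn_integrand huc hcontsub _ _ _ _ hne1 hne2
  have hcbb : ContinuousOn bb (Set.Icc (0:ℝ) t) :=
    contOn_integrand hu' hcontsub _ _ _ _ hne1 hne2
  have hcF' : ContinuousOn F' (Set.Icc (0:ℝ) t) := by
    have c1 : ContinuousOn (fun r : ℝ => (1 + (t - r)) ^ (-(1 + μ))) (Set.Icc (0:ℝ) t) :=
      ContinuousOn.rpow_const hcontsub.continuousOn (fun r hr => Or.inl (hne1 r hr))
    have c2 : ContinuousOn (fun r : ℝ => (1 + (t - r)) ^ (-(2 + μ))) (Set.Icc (0:ℝ) t) :=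
      ContinuousOn.rpow_const hcontsub.continuousOn (fun r hr => Or.inl (hne1 r hr))
    have c3 : ContinuousOn (fun r : ℝ => (1 + t + r) ^ (-α)) (Set.Icc (0:ℝ) t) :=
      ContinuousOn.rpow_const (continuous_const.add continuous_id).continuousOn
        (fun r hr => Or.inl (hne2 r hr))
    have c4 : ContinuousOn (fun r : ℝ => (1 + t + r) ^ (-α - 1)) (Set.Icc (0:ℝ) t) :=
      ContinuousOn.rpow_const (continuous_const.add continuous_id).continuousOn
        (fun r hr => Or.inl (hne2 r hr))
    have cw : ContinuousOn (fun r : ℝ => r ^ 2 * (1 + t + r) ^ (-α)) (Set.Icc (0:ℝ) t) :=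
      (continuous_pow 2).continuousOn.mul c3
    have cw' : ContinuousOn
        (fun r : ℝ => 2 * r * (1 + t + r) ^ (-α) + r ^ 2 * (-α * (1 + t + r) ^ (-α - 1)))
        (Set.Icc (0:ℝ) t) :=
      ((continuous_const.mul continuous_id).continuousOn.mul c3).add
        ((continuous_pow 2).continuousOn.mul (continuousOn_const.mul c4))
    exact ((continuous_const.mul huc |>.mul hu').continuousOn.mul (c1.mul cw)).add
      ((huc.pow 2).continuousOn.mul
        (((continuousOn_const.mul c2).mul cw).add (c1.mul cw')))
  have hintF' : IntervalIntegrable F' volume 0 t :=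
    (by rwa [Set.uIcc_of_le ht] : ContinuousOn F' (Set.uIcc 0 t)).intervalIntegrable
  have hig : IntervalIntegrable g volume 0 t :=
    (by rwa [Set.uIcc_of_le ht] : ContinuousOn g (Set.uIcc 0 t)).intervalIntegrable
  have hibb : IntervalIntegrable bb volume 0 t :=
    (by rwa [Set.uIcc_of_le ht] : ContinuousOn bb (Set.uIcc 0 t)).intervalIntegrable
  have hFTC : ∫ r in (0:ℝ)..t, F' r = F t - F 0 :=
    intervalIntegral.integral_eq_sub_of_hasDerivAt
      (fun r hr => hderiv r (by rwa [Set.uIcc_of_le ht] at hr)) hintF'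
  have hF0 : F 0 = 0 := by simp [hFdef]
  have hFt : F t = (u t) ^ 2 * (t ^ 2 * (1 + t + t) ^ (-α)) := by
    simp [hFdef]
  have hpt : ∀ r ∈ Set.Icc (0:ℝ) t, ((1 + μ)/2) * g r - (2/(1 + μ)) * bb r ≤ F' r := by
    intro r hr
    have hs : (0:ℝ) < 1 + (t - r) := by have := hr.2; linarith
    have hp : (0:ℝ) < 1 + t + r := by have := hr.1; linarith
    have hr0 : (0:ℝ) ≤ r := hr.1
    have hwpos : (0:ℝ) ≤ r ^ 2 * (1 + t + r) ^ (-α) := by positivity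
    have hcross := cross_bound ((1 + μ)/2) (u r) (deriv u r) (1 + (t - r))
      (r ^ 2 * (1 + t + r) ^ (-α)) (-(2 + μ)) (-(1 + μ)) (-μ) (by positivity) hs hwpos (by ring)
    have hinv : ((1 + μ)/2)⁻¹ = 2/(1 + μ) := by
      rw [inv_div]
    rw [hinv] at hcross
    have hsplit : (1 + t + r) ^ (-α) = (1 + t + r) ^ (-α - 1) * (1 + t + r) := by
      rw [← Real.rpow_add_one hp.ne' (-α - 1)]; congr 1; ring
    have hq : (0:ℝ) < (1 + t + r) ^ (-α - 1) := Real.rpow_pos_of_pos hp _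
    have hw' : (0:ℝ) ≤ 2 * r * (1 + t + r) ^ (-α)
        + r ^ 2 * (-α * (1 + t + r) ^ (-α - 1)) := by
      rw [hsplit]
      have h2r : (0:ℝ) ≤ r * (1 + t + r) ^ (-α - 1) := by positivity
      nlinarith [mul_nonneg h2r hr0, mul_nonneg h2r ht]
    have hterm : (0:ℝ) ≤ (u r) ^ 2 * ((1 + (t - r)) ^ (-(1 + μ))
        * (2 * r * (1 + t + r) ^ (-α) + r ^ 2 * (-α * (1 + t + r) ^ (-α - 1)))) :=
      mul_nonneg (sq_nonneg _) (mul_nonneg (Real.rpow_pos_of_pos hs _).le hw')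
    simp only [hgdef, hbbdef, hF'def]
    nlinarith [hcross, hterm]
  have hmono : ∫ r in (0:ℝ)..t, (((1 + μ)/2) * g r - (2/(1 + μ)) * bb r)
      ≤ ∫ r in (0:ℝ)..t, F' r :=
    intervalIntegral.integral_mono_on ht
      ((hig.const_mul _).sub (hibb.const_mul _)) hintF' hpt
  rw [intervalIntegral.integral_sub (hig.const_mul _) (hibb.const_mul _),
    intervalIntegral.integral_const_mul, intervalIntegral.integral_const_mul, hFTC, hF0, hFt]
    at hmono
  rw [← intervalIntegral.integral_of_le ht, ← intervalIntegral.integral_of_le ht]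
  linarith

set_option maxHeartbeats 1000000 in
theorem lightcone_hardy_inequality (γ₀ ν₀ : ℝ) (hγ₀ : 0 < γ₀) (hν₀ : 0 < ν₀) :
    ∃ C > 0, ∀ (γ μ α t : ℝ) (u : ℝ → ℝ),
      γ₀ ≤ γ → ν₀ ≤ 1 + μ → 0 ≤ α → α ≤ 2 → 0 ≤ t →
      ContDiff ℝ 1 u → HasCompactSupport u →
      (∫ r in Set.Ioc (0:ℝ) t,
          (u r)^2 * (1 + |r - t|) ^ (-(2 + μ)) * r^2 * (1 + t + r) ^ (-α)) +
        (∫ r in Set.Ioi t,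
          (u r)^2 * (1 + |r - t|) ^ (-1 + γ) * r^2 * (1 + t + r) ^ (-α)) ≤
      C * ((∫ r in Set.Ioc (0:ℝ) t,
            (deriv u r)^2 * (1 + |r - t|) ^ (-μ) * r^2 * (1 + t + r) ^ (-α)) +
        (∫ r in Set.Ioi t,
            (deriv u r)^2 * (1 + |r - t|) ^ (1 + γ) * r^2 * (1 + t + r) ^ (-α))) := by
  refine ⟨4/ν₀^2 + 4/(ν₀*γ₀) + 4/γ₀^2, by positivity, ?_⟩
  intro γ μ α t u hγle hνle hα0 hα2 ht hu hsupp
  have hγ : 0 < γ := lt_of_lt_of_le hγ₀ hγle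
  have hν : 0 < 1 + μ := lt_of_lt_of_le hν₀ hνle
  have huc : Continuous u := hu.continuous
  have hu' : Continuous (deriv u) := hu.continuous_deriv le_rfl
  obtain ⟨R₀, hR₀⟩ := hsupp.isCompact.bddAbove
  set R := max t R₀ + 1 with hRdef
  have htR : t ≤ R := by have := le_max_left t R₀; linarith
  have hvan : ∀ r, R₀ < r → u r = 0 ∧ deriv u r = 0 := by
    intro r hr
    have hrn : r ∉ tsupport u := fun h => absurd (hR₀ h) (not_le.2 hr)
    refine ⟨image_eq_zero_of_notMem_tsupport hrn, ?_⟩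
    by_contra h
    exact hrn (support_deriv_subset (Function.mem_support.2 h))
  have hRR₀ : R₀ < R := by have := le_max_right t R₀; linarith
  have huR : u R = 0 := (hvan R hRR₀).1
  -- continuity and integrability on the exterior interval
  have hne1 : ∀ r ∈ Set.Icc t R, (1:ℝ) + (r - t) ≠ 0 := fun r hr =>
    ne_of_gt (by have := hr.1; linarith)
  have hne2 : ∀ r ∈ Set.Icc t R, (1:ℝ) + t + r ≠ 0 := fun r hr =>
    ne_of_gt (by have := hr.1; linarith)
  have hcontsub : Continuous (fun r : ℝ => 1 + (r - t)) := by continuity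
  have hIntB : IntegrableOn
      (fun r => (u r) ^ 2 * (1 + (r - t)) ^ (-1 + γ) * r ^ 2 * (1 + t + r) ^ (-α))
      (Set.Ioc t R) :=
    ((contOn_integrand huc hcontsub _ _ _ _ hne1 hne2).integrableOn_Icc).mono_set
      Set.Ioc_subset_Icc_self
  have hIntB' : IntegrableOn
      (fun r => (deriv u r) ^ 2 * (1 + (r - t)) ^ (1 + γ) * r ^ 2 * (1 + t + r) ^ (-α))
      (Set.Ioc t R) :=
    ((contOn_integrand hu' hcontsub _ _ _ _ hne1 hne2).integrableOn_Icc).mono_set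
      Set.Ioc_subset_Icc_self
  -- convert the exterior integrals
  have hBconv : (∫ r in Set.Ioi t, (u r)^2 * (1 + |r - t|) ^ (-1 + γ) * r^2 * (1 + t + r) ^ (-α))
      = ∫ r in Set.Ioc t R, (u r) ^ 2 * (1 + (r - t)) ^ (-1 + γ) * r ^ 2 * (1 + t + r) ^ (-α) := by
    rw [setIntegral_congr_fun measurableSet_Ioi
      (g := fun r => (u r) ^ 2 * (1 + (r - t)) ^ (-1 + γ) * r ^ 2 * (1 + t + r) ^ (-α))
      (fun r hr => by
        rw [abs_of_nonneg (by simp only [Set.mem_Ioi] at hr; linarith : (0:ℝ) ≤ r - t)])]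
    exact integral_Ioi_eq_Ioc htR
      (fun r hr => by rw [(hvan r (by linarith)).1]; ring) hIntB
  have hBconv' : (∫ r in Set.Ioi t,
        (deriv u r)^2 * (1 + |r - t|) ^ (1 + γ) * r^2 * (1 + t + r) ^ (-α))
      = ∫ r in Set.Ioc t R,
        (deriv u r) ^ 2 * (1 + (r - t)) ^ (1 + γ) * r ^ 2 * (1 + t + r) ^ (-α) := by
    rw [setIntegral_congr_fun measurableSet_Ioi
      (g := fun r => (deriv u r) ^ 2 * (1 + (r - t)) ^ (1 + γ) * r ^ 2 * (1 + t + r) ^ (-α))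
      (fun r hr => by
        rw [abs_of_nonneg (by simp only [Set.mem_Ioi] at hr; linarith : (0:ℝ) ≤ r - t)])]
    exact integral_Ioi_eq_Ioc htR
      (fun r hr => by rw [(hvan r (by linarith)).2]; ring) hIntB'
  -- convert the interior integrals
  have hAconv : (∫ r in Set.Ioc (0:ℝ) t,
        (u r)^2 * (1 + |r - t|) ^ (-(2 + μ)) * r^2 * (1 + t + r) ^ (-α))
      = ∫ r in Set.Ioc (0:ℝ) t,
        (u r) ^ 2 * (1 + (t - r)) ^ (-(2 + μ)) * r ^ 2 * (1 + t + r) ^ (-α) :=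
    setIntegral_congr_fun measurableSet_Ioc (fun r hr => by
      rw [abs_sub_comm, abs_of_nonneg (sub_nonneg.2 hr.2)])
  have hAconv' : (∫ r in Set.Ioc (0:ℝ) t,
        (deriv u r)^2 * (1 + |r - t|) ^ (-μ) * r^2 * (1 + t + r) ^ (-α))
      = ∫ r in Set.Ioc (0:ℝ) t,
        (deriv u r) ^ 2 * (1 + (t - r)) ^ (-μ) * r ^ 2 * (1 + t + r) ^ (-α) :=
    setIntegral_congr_fun measurableSet_Ioc (fun r hr => by
      rw [abs_sub_comm, abs_of_nonneg (sub_nonneg.2 hr.2)])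
  rw [hAconv, hAconv', hBconv, hBconv']
  set A := ∫ r in Set.Ioc (0:ℝ) t,
    (u r) ^ 2 * (1 + (t - r)) ^ (-(2 + μ)) * r ^ 2 * (1 + t + r) ^ (-α) with hA
  set A' := ∫ r in Set.Ioc (0:ℝ) t,
    (deriv u r) ^ 2 * (1 + (t - r)) ^ (-μ) * r ^ 2 * (1 + t + r) ^ (-α) with hA'
  set B := ∫ r in Set.Ioc t R,
    (u r) ^ 2 * (1 + (r - t)) ^ (-1 + γ) * r ^ 2 * (1 + t + r) ^ (-α) with hB
  set B' := ∫ r in Set.Ioc t R,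
    (deriv u r) ^ 2 * (1 + (r - t)) ^ (1 + γ) * r ^ 2 * (1 + t + r) ^ (-α) with hB'
  set W := (u t) ^ 2 * (t ^ 2 * (1 + t + t) ^ (-α)) with hW
  have h_ext : W + (γ/2) * B ≤ (2/γ) * B' :=
    ext_est γ α t R hγ hα0 hα2 ht htR u hu huR
  have h_int : ((1 + μ)/2) * A ≤ W + (2/(1 + μ)) * A' :=
    int_est μ α t hν hα0 hα2 ht u hu
  -- nonnegativity
  have hposint : ∀ (v : ℝ → ℝ) (f : ℝ → ℝ) (e1 e2 : ℝ) (s : Set ℝ), MeasurableSet s →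
      (∀ r ∈ s, (0:ℝ) ≤ f r) → (∀ r ∈ s, (0:ℝ) ≤ 1 + t + r) →
      (0:ℝ) ≤ ∫ r in s, (v r) ^ 2 * (f r) ^ e1 * r ^ 2 * (1 + t + r) ^ e2 := by
    intro v f e1 e2 s hs h1 h2
    refine setIntegral_nonneg hs (fun r hr => ?_)
    exact mul_nonneg (mul_nonneg (mul_nonneg (sq_nonneg _)
      (Real.rpow_nonneg (h1 r hr) _)) (sq_nonneg _)) (Real.rpow_nonneg (h2 r hr) _)
  have hA'0 : (0:ℝ) ≤ A' := hposint _ _ _ _ _ measurableSet_Ioc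
    (fun r hr => by have := hr.2; linarith) (fun r hr => by have := hr.1; linarith)
  have hB0 : (0:ℝ) ≤ B := hposint _ _ _ _ _ measurableSet_Ioc
    (fun r hr => by have := hr.1; linarith) (fun r hr => by have := hr.1; linarith)
  have hB'0 : (0:ℝ) ≤ B' := hposint _ _ _ _ _ measurableSet_Ioc
    (fun r hr => by have := hr.1; linarith) (fun r hr => by have := hr.1; linarith)
  have hW0 : (0:ℝ) ≤ W :=
    mul_nonneg (sq_nonneg _) (mul_nonneg (sq_nonneg _) (Real.rpow_nonneg (by linarith) _))
  -- main arithmetic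
  have hWB : W ≤ 2/γ * B' := by nlinarith [mul_nonneg (le_of_lt (by positivity : (0:ℝ) < γ/2)) hB0]
  have hBle : B ≤ 4/γ^2 * B' := by
    have h1 : γ/2 * B ≤ 2/γ * B' := by linarith
    have h2 := mul_le_mul_of_nonneg_left h1 (le_of_lt (by positivity : (0:ℝ) < 2/γ))
    have e1 : 2/γ * (γ/2 * B) = B := by field_simp
    have e2 : 2/γ * (2/γ * B') = 4/γ^2 * B' := by field_simp; ring
    linarith
  have hAle : A ≤ 2/(1 + μ) * (2/γ * B') + 4/(1 + μ)^2 * A' := by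
    have h2 := mul_le_mul_of_nonneg_left h_int
      (le_of_lt (by positivity : (0:ℝ) < 2/(1 + μ)))
    have e1 : 2/(1 + μ) * ((1 + μ)/2 * A) = A := by field_simp
    have e2 : 2/(1 + μ) * (W + 2/(1 + μ) * A') = 2/(1 + μ) * W + 4/(1 + μ)^2 * A' := by
      field_simp; ring
    have h3 : 2/(1 + μ) * W ≤ 2/(1 + μ) * (2/γ * B') :=
      mul_le_mul_of_nonneg_left hWB (le_of_lt (by positivity))
    linarith
  have hc1 : 4/(1 + μ)^2 * A' ≤ 4/ν₀^2 * A' :=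
    mul_le_mul_of_nonneg_right
      (div_le_div_of_nonneg_left (by norm_num) (by positivity) (by nlinarith)) hA'0
  have hc2 : 2/(1 + μ) * (2/γ * B') ≤ 4/(ν₀*γ₀) * B' := by
    have e : 2/(1 + μ) * (2/γ * B') = 4/((1 + μ)*γ) * B' := by field_simp; ring
    rw [e]
    refine mul_le_mul_of_nonneg_right
      (div_le_div_of_nonneg_left (by norm_num) (by positivity) ?_) hB'0
    exact mul_le_mul hνle hγle hγ₀.le (by linarith)
  have hc3 : 4/γ^2 * B' ≤ 4/γ₀^2 * B' :=
    mul_le_mul_of_nonneg_right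
      (div_le_div_of_nonneg_left (by norm_num) (by positivity) (by nlinarith)) hB'0
  have hrest1 : (0:ℝ) ≤ 4/(ν₀*γ₀) * A' := mul_nonneg (by positivity) hA'0
  have hrest2 : (0:ℝ) ≤ 4/γ₀^2 * A' := mul_nonneg (by positivity) hA'0
  have hrest3 : (0:ℝ) ≤ 4/ν₀^2 * B' := mul_nonneg (by positivity) hB'0
  have hexp : (4/ν₀^2 + 4/(ν₀*γ₀) + 4/γ₀^2) * (A' + B')
      = 4/ν₀^2 * A' + 4/(ν₀*γ₀) * A' + 4/γ₀^2 * A'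
        + 4/ν₀^2 * B' + 4/(ν₀*γ₀) * B' + 4/γ₀^2 * B' := by ring
  linarith
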